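/- The two-qubit Werner state ρ_α = α|ψ⁻⟩⟨ψ⁻| + (1−α)/4 · 𝟙₄ is separable for α ≤ 1/3, i.e., it can be written as a convex combination of product states; explicitly, for α = 1/3 it equals an average over product states, and by convexity with the maximally mixed state the same holds for all α ≤ 1/3. -/

import Mathlib

open Matrix Kronecker
open scoped ComplexOrder

noncomputable section

def ψminus : Fin 2 × Fin 2 → ℂ := fun p =>
  if p = (0, 1) then ((Real.sqrt 2)⁻¹ : ℝ)
  else if p = (1, 0) then (-(Real.sqrt 2)⁻¹ : ℝ)
  else 0

/-- The two-qubit Werner state ρ_α = α|ψ⁻⟩⟨ψ⁻| + (1−α)/4 · 𝟙₄. -/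
def werner (α : ℝ) : Matrix (Fin 2 × Fin 2) (Fin 2 × Fin 2) ℂ :=
  (α : ℂ) • Matrix.of (fun p q => ψminus p * starRingEnd ℂ (ψminus q)) +
    (((1 - α) / 4 : ℝ) : ℂ) • 1

def proj (v : Fin 2 → ℂ) : Matrix (Fin 2) (Fin 2) ℂ :=
  Matrix.of fun i j => v i * starRingEnd ℂ (v j)

lemma proj_posSemidef (v : Fin 2 → ℂ) : (proj v).PosSemidef := by
  constructor
  · ext i j
    simp [proj, Matrix.conjTranspose_apply, mul_comm]
  · intro x
    have h := star_mul_self_nonneg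
      (starRingEnd ℂ (v 0) * x 0 + starRingEnd ℂ (v 1) * x 1)
    convert h using 1
    simp [proj, dotProduct, Matrix.mulVec, Fin.sum_univ_two, star_add, StarMul.star_mul,
      RCLike.star_def, map_add, _root_.map_mul, Complex.conj_conj, Finsupp.sum_fintype]
    ring

noncomputable def sq2i : ℝ := (Real.sqrt 2)⁻¹

lemma hc : (sq2i : ℂ) * (sq2i : ℂ) = 1 / 2 := by
  have : sq2i * sq2i = 1 / 2 := by
    rw [sq2i, ← mul_inv]
    rw [Real.mul_self_sqrt (by norm_num : (2:ℝ) ≥ 0)]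
    norm_num
  rw [← Complex.ofReal_mul, this]
  norm_num

lemma hrsq : ((Real.sqrt 2)⁻¹ : ℝ) ^ 2 = 1 / 2 := by
  rw [sq, ← mul_inv, Real.mul_self_sqrt (by norm_num : (0:ℝ) ≤ 2)]
  norm_num

lemma hcsq : (((Real.sqrt 2 : ℝ) : ℂ))⁻¹ ^ 2 = 1 / 2 := by
  rw [← Complex.ofReal_inv, ← Complex.ofReal_pow, hrsq]
  norm_num

lemma hcmul : (((Real.sqrt 2 : ℝ) : ℂ))⁻¹ * (((Real.sqrt 2 : ℝ) : ℂ))⁻¹ = 1 / 2 := by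
  rw [← sq, hcsq]

-- explicit rational projectors
def P0 : Matrix (Fin 2) (Fin 2) ℂ := !![1, 0; 0, 0]
def P1 : Matrix (Fin 2) (Fin 2) ℂ := !![0, 0; 0, 1]
def Pp : Matrix (Fin 2) (Fin 2) ℂ := !![1/2, 1/2; 1/2, 1/2]
def Pm : Matrix (Fin 2) (Fin 2) ℂ := !![1/2, -(1/2); -(1/2), 1/2]
def Pi' : Matrix (Fin 2) (Fin 2) ℂ := !![1/2, -(Complex.I/2); Complex.I/2, 1/2]
def Pmi : Matrix (Fin 2) (Fin 2) ℂ := !![1/2, Complex.I/2; -(Complex.I/2), 1/2]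

lemma P0_eq : P0 = proj ![1, 0] := by
  ext i j; fin_cases i <;> fin_cases j <;> simp [P0, proj]
lemma P1_eq : P1 = proj ![0, 1] := by
  ext i j; fin_cases i <;> fin_cases j <;> simp [P1, proj]
lemma Pp_eq : Pp = proj ![(sq2i : ℂ), (sq2i : ℂ)] := by
  ext i j; fin_cases i <;> fin_cases j <;>
    simp [Pp, proj, Complex.conj_ofReal, hc]
lemma Pm_eq : Pm = proj ![(sq2i : ℂ), -(sq2i : ℂ)] := by
  ext i j; fin_cases i <;> fin_cases j <;>
    simp [Pm, proj, Complex.conj_ofReal, hc]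
lemma Pi'_eq : Pi' = proj ![(sq2i : ℂ), Complex.I * (sq2i : ℂ)] := by
  ext i j; fin_cases i <;> fin_cases j <;>
    simp [Pi', proj, Complex.conj_ofReal, _root_.map_mul, Complex.conj_I] <;> ring_nf <;>
    simp [Complex.I_sq, pow_two, hc]
lemma Pmi_eq : Pmi = proj ![(sq2i : ℂ), -(Complex.I * (sq2i : ℂ))] := by
  ext i j; fin_cases i <;> fin_cases j <;>
    simp [Pmi, proj, Complex.conj_ofReal, _root_.map_mul, Complex.conj_I] <;> ring_nf <;>
    simp [Complex.I_sq, pow_two, hc]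

lemma P0_ok : P0.PosSemidef ∧ P0.trace = 1 :=
  ⟨P0_eq ▸ proj_posSemidef _, by simp [P0, Matrix.trace, Fin.sum_univ_two]⟩
lemma P1_ok : P1.PosSemidef ∧ P1.trace = 1 :=
  ⟨P1_eq ▸ proj_posSemidef _, by simp [P1, Matrix.trace, Fin.sum_univ_two]⟩
lemma Pp_ok : Pp.PosSemidef ∧ Pp.trace = 1 :=
  ⟨Pp_eq ▸ proj_posSemidef _, by norm_num [Pp, Matrix.trace, Fin.sum_univ_two]⟩
lemma Pm_ok : Pm.PosSemidef ∧ Pm.trace = 1 :=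
  ⟨Pm_eq ▸ proj_posSemidef _, by norm_num [Pm, Matrix.trace, Fin.sum_univ_two]⟩
lemma Pi'_ok : Pi'.PosSemidef ∧ Pi'.trace = 1 :=
  ⟨Pi'_eq ▸ proj_posSemidef _, by norm_num [Pi', Matrix.trace, Fin.sum_univ_two]⟩
lemma Pmi_ok : Pmi.PosSemidef ∧ Pmi.trace = 1 :=
  ⟨Pmi_eq ▸ proj_posSemidef _, by norm_num [Pmi, Matrix.trace, Fin.sum_univ_two]⟩

set_option maxHeartbeats 2000000 in
/-- Werner states with α ≤ 1/3 are separable: convex combinations of product states. -/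
theorem werner_separable (α : ℝ) (h0 : 0 ≤ α) (h : α ≤ 1 / 3) :
    ∃ (n : ℕ) (p : Fin n → ℝ) (ρA ρB : Fin n → Matrix (Fin 2) (Fin 2) ℂ),
      (∀ i, 0 ≤ p i) ∧ (∑ i, p i = 1) ∧
      (∀ i, (ρA i).PosSemidef ∧ (ρA i).trace = 1) ∧
      (∀ i, (ρB i).PosSemidef ∧ (ρB i).trace = 1) ∧
      werner α = ∑ i, ((p i : ℝ) : ℂ) • (ρA i ⊗ₖ ρB i) := by
  refine ⟨10,
    ![α/2, α/2, α/2, α/2, α/2, α/2, (1-3*α)/4, (1-3*α)/4, (1-3*α)/4, (1-3*α)/4],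
    ![P0, P1, Pp, Pm, Pi', Pmi, P0, P0, P1, P1],
    ![P1, P0, Pm, Pp, Pmi, Pi', P0, P1, P0, P1], ?_, ?_, ?_, ?_, ?_⟩
  · intro i; fin_cases i <;>
      first
        | (show (0:ℝ) ≤ α/2; linarith)
        | (show (0:ℝ) ≤ (1-3*α)/4; linarith)
  · simp [Fin.sum_univ_succ]; ring
  · intro i; fin_cases i <;>
      first | exact P0_ok | exact P1_ok | exact Pp_ok | exact Pm_ok
            | exact Pi'_ok | exact Pmi_ok
  · intro i; fin_cases i <;>
      first | exact P0_ok | exact P1_ok | exact Pp_ok | exact Pm_ok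
            | exact Pi'_ok | exact Pmi_ok
  · ext ⟨i, j⟩ ⟨k, l⟩
    fin_cases i <;> fin_cases j <;> fin_cases k <;> fin_cases l <;>
      (simp [werner, ψminus, P0, P1, Pp, Pm, Pi', Pmi, Fin.sum_univ_succ,
        Matrix.one_apply, Prod.ext_iff, Complex.conj_ofReal] <;>
      ring_nf <;>
      (try simp only [Complex.I_sq, hcsq, hcmul]) <;>
      ring_nf)
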